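/- For complex numbers z1, z2, z3 with |z_i| < 1 and positive integers k1, k2, k3, the product Li_{k1}(z1)·Li_{k2}(z2)·Li_{k3}(z3) equals Σ_{σ ∈ S3} Li_{k_{σ(1)},k_{σ(2)},k_{σ(3)}}(z_{σ(1)}, z_{σ(1)}z_{σ(2)}, z_{σ(1)}z_{σ(2)}z_{σ(3)}) + Σ_{τ ∈ A3} Li_{k_{τ(1)}+k_{τ(2)},k_{τ(3)}}(z_{τ(1)}z_{τ(2)}, z_{τ(1)}z_{τ(2)}z_{τ(3)}) + Σ_{τ ∈ A3} Li_{k_{τ(1)},k_{τ(2)}+k_{τ(3)}}(z_{τ(1)}, z_{τ(1)}z_{τ(2)}z_{τ(3)}) + Li_{k1+k2+k3}(z1·z2·z3), where S3 is the symmetric group and A3 the alternating group on three letters. -/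

import Mathlib

noncomputable def Li (k : ℕ) (z : ℂ) : ℂ :=
  ∑' m : ℕ, if 0 < m then z ^ m / (m : ℂ) ^ k else 0

noncomputable def Li2 (k1 k2 : ℕ) (z1 z2 : ℂ) : ℂ :=
  ∑' p : ℕ × ℕ, if p.2 < p.1 ∧ 0 < p.2 then
    z1 ^ (p.1 - p.2) * z2 ^ p.2 / ((p.1 : ℂ) ^ k1 * (p.2 : ℂ) ^ k2) else 0

noncomputable def Li3 (k1 k2 k3 : ℕ) (z1 z2 z3 : ℂ) : ℂ :=
  ∑' t : ℕ × ℕ × ℕ, if t.2.1 < t.1 ∧ t.2.2 < t.2.1 ∧ 0 < t.2.2 then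
    z1 ^ (t.1 - t.2.1) * z2 ^ (t.2.1 - t.2.2) * z3 ^ t.2.2 /
      ((t.1 : ℂ) ^ k1 * (t.2.1 : ℂ) ^ k2 * (t.2.2 : ℂ) ^ k3) else 0

namespace TPPAux

lemma summable_ite {α : Type*} (F : α → ℂ) (hF : Summable fun x => ‖F x‖)
    (Q : α → Prop) [DecidablePred Q] :
    Summable fun x => if Q x then F x else 0 := by
  apply Summable.of_norm_bounded hF
  intro x
  by_cases h : Q x <;> simp [h]

lemma tsum_ite_split' {α : Type*} (F : α → ℂ) (hF : Summable fun x => ‖F x‖)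
    (Q Q1 Q2 : α → Prop) [DecidablePred Q] [DecidablePred Q1] [DecidablePred Q2]
    (h : ∀ x, (Q x ↔ (Q1 x ∨ Q2 x)) ∧ ¬ (Q1 x ∧ Q2 x)) :
    (∑' x, if Q x then F x else 0)
      = (∑' x, if Q1 x then F x else 0) + ∑' x, if Q2 x then F x else 0 := by
  rw [← Summable.tsum_add (summable_ite F hF Q1) (summable_ite F hF Q2)]
  refine tsum_congr fun x => ?_
  obtain ⟨hiff, hdis⟩ := h x
  by_cases h1 : Q1 x
  · by_cases h2 : Q2 x
    · exact absurd ⟨h1, h2⟩ hdis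
    · rw [if_pos (hiff.mpr (Or.inl h1)), if_pos h1, if_neg h2, add_zero]
  · by_cases h2 : Q2 x
    · rw [if_pos (hiff.mpr (Or.inr h2)), if_neg h1, if_pos h2, zero_add]
    · rw [if_neg (fun hq => ((hiff.mp hq).elim h1 h2)), if_neg h1, if_neg h2, add_zero]

end TPPAux

namespace TPPAux

lemma Li3_eq (j1 j2 j3 : ℕ) (u v w : ℂ) :
    Li3 j1 j2 j3 u (u * v) (u * v * w)
      = ∑' t : ℕ × ℕ × ℕ, if t.2.1 < t.1 ∧ t.2.2 < t.2.1 ∧ 0 < t.2.2 then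
          u ^ t.1 * v ^ t.2.1 * w ^ t.2.2 /
            ((t.1 : ℂ) ^ j1 * (t.2.1 : ℂ) ^ j2 * (t.2.2 : ℂ) ^ j3) else 0 := by
  unfold Li3
  refine tsum_congr fun t => ?_
  obtain ⟨a, b, c⟩ := t
  by_cases h : b < a ∧ c < b ∧ 0 < c
  · rw [if_pos h, if_pos h]
    obtain ⟨h1, h2, h3⟩ := h
    obtain ⟨y, rfl⟩ : ∃ y, b = c + y := ⟨b - c, by omega⟩
    obtain ⟨x, rfl⟩ : ∃ x, a = c + y + x := ⟨a - (c + y), by omega⟩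
    simp only
    rw [show c + y + x - (c + y) = x from by omega, show c + y - c = y from by omega]
    ring
  · rw [if_neg h, if_neg h]

lemma Li2_top (j1 j2 j3 : ℕ) (u v w : ℂ) :
    Li2 (j1 + j2) j3 (u * v) (u * v * w)
      = ∑' p : ℕ × ℕ, if p.2 < p.1 ∧ 0 < p.2 then
          u ^ p.1 * v ^ p.1 * w ^ p.2 /
            ((p.1 : ℂ) ^ j1 * (p.1 : ℂ) ^ j2 * (p.2 : ℂ) ^ j3) else 0 := by
  unfold Li2
  refine tsum_congr fun p => ?_
  obtain ⟨a, b⟩ := p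
  by_cases h : b < a ∧ 0 < b
  · rw [if_pos h, if_pos h]
    obtain ⟨h1, h2⟩ := h
    obtain ⟨x, rfl⟩ : ∃ x, a = b + x := ⟨a - b, by omega⟩
    simp only
    rw [show b + x - b = x from by omega]
    ring
  · rw [if_neg h, if_neg h]

lemma Li2_bot (j1 j2 j3 : ℕ) (u v w : ℂ) :
    Li2 j1 (j2 + j3) u (u * v * w)
      = ∑' p : ℕ × ℕ, if p.2 < p.1 ∧ 0 < p.2 then
          u ^ p.1 * v ^ p.2 * w ^ p.2 /
            ((p.1 : ℂ) ^ j1 * (p.2 : ℂ) ^ j2 * (p.2 : ℂ) ^ j3) else 0 := by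
  unfold Li2
  refine tsum_congr fun p => ?_
  obtain ⟨a, b⟩ := p
  by_cases h : b < a ∧ 0 < b
  · rw [if_pos h, if_pos h]
    obtain ⟨h1, h2⟩ := h
    obtain ⟨x, rfl⟩ : ∃ x, a = b + x := ⟨a - b, by omega⟩
    simp only
    rw [show b + x - b = x from by omega]
    ring
  · rw [if_neg h, if_neg h]

lemma Li_eq (j1 j2 j3 : ℕ) (u v w : ℂ) :
    Li (j1 + j2 + j3) (u * v * w)
      = ∑' n : ℕ, if 0 < n then
          u ^ n * v ^ n * w ^ n / ((n : ℂ) ^ j1 * (n : ℂ) ^ j2 * (n : ℂ) ^ j3) else 0 := by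
  unfold Li
  refine tsum_congr fun n => ?_
  by_cases h : 0 < n
  · rw [if_pos h, if_pos h]; ring
  · rw [if_neg h, if_neg h]

/-! equivs -/

def e102 : ℕ × ℕ × ℕ ≃ ℕ × ℕ × ℕ :=
  ⟨fun t => (t.2.1, t.1, t.2.2), fun t => (t.2.1, t.1, t.2.2),
   fun ⟨_, _, _⟩ => rfl, fun ⟨_, _, _⟩ => rfl⟩

def e021 : ℕ × ℕ × ℕ ≃ ℕ × ℕ × ℕ :=
  ⟨fun t => (t.1, t.2.2, t.2.1), fun t => (t.1, t.2.2, t.2.1),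
   fun ⟨_, _, _⟩ => rfl, fun ⟨_, _, _⟩ => rfl⟩

def e210 : ℕ × ℕ × ℕ ≃ ℕ × ℕ × ℕ :=
  ⟨fun t => (t.2.2, t.2.1, t.1), fun t => (t.2.2, t.2.1, t.1),
   fun ⟨_, _, _⟩ => rfl, fun ⟨_, _, _⟩ => rfl⟩

def e120 : ℕ × ℕ × ℕ ≃ ℕ × ℕ × ℕ :=
  ⟨fun t => (t.2.1, t.2.2, t.1), fun t => (t.2.2, t.1, t.2.1),
   fun ⟨_, _, _⟩ => rfl, fun ⟨_, _, _⟩ => rfl⟩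

def e201 : ℕ × ℕ × ℕ ≃ ℕ × ℕ × ℕ :=
  ⟨fun t => (t.2.2, t.1, t.2.1), fun t => (t.2.1, t.2.2, t.1),
   fun ⟨_, _, _⟩ => rfl, fun ⟨_, _, _⟩ => rfl⟩

/-! matchers -/

lemma m012 (j1 j2 j3 : ℕ) (u v w : ℂ) :
    (∑' t : ℕ × ℕ × ℕ, if t.2.1 < t.1 ∧ t.2.2 < t.2.1 ∧ 0 < t.2.2 then
        u ^ t.1 * v ^ t.2.1 * w ^ t.2.2 /
          ((t.1 : ℂ) ^ j1 * (t.2.1 : ℂ) ^ j2 * (t.2.2 : ℂ) ^ j3) else 0)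
      = Li3 j1 j2 j3 u (u * v) (u * v * w) := (Li3_eq j1 j2 j3 u v w).symm

lemma m102 (j1 j2 j3 : ℕ) (u v w : ℂ) :
    (∑' t : ℕ × ℕ × ℕ, if t.1 < t.2.1 ∧ t.2.2 < t.1 ∧ 0 < t.2.2 then
        u ^ t.1 * v ^ t.2.1 * w ^ t.2.2 /
          ((t.1 : ℂ) ^ j1 * (t.2.1 : ℂ) ^ j2 * (t.2.2 : ℂ) ^ j3) else 0)
      = Li3 j2 j1 j3 v (v * u) (v * u * w) := by
  rw [Li3_eq j2 j1 j3 v u w]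
  conv_rhs => rw [← e102.tsum_eq]
  refine tsum_congr fun t => ?_
  obtain ⟨a, b, c⟩ := t
  simp only [e102, Equiv.coe_fn_mk]
  by_cases h : a < b ∧ c < a ∧ 0 < c
  · rw [if_pos h]; erw [if_pos h]; ring
  · rw [if_neg h]; erw [if_neg h]

lemma m021 (j1 j2 j3 : ℕ) (u v w : ℂ) :
    (∑' t : ℕ × ℕ × ℕ, if t.2.2 < t.1 ∧ t.2.1 < t.2.2 ∧ 0 < t.2.1 then
        u ^ t.1 * v ^ t.2.1 * w ^ t.2.2 /
          ((t.1 : ℂ) ^ j1 * (t.2.1 : ℂ) ^ j2 * (t.2.2 : ℂ) ^ j3) else 0)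
      = Li3 j1 j3 j2 u (u * w) (u * w * v) := by
  rw [Li3_eq j1 j3 j2 u w v]
  conv_rhs => rw [← e021.tsum_eq]
  refine tsum_congr fun t => ?_
  obtain ⟨a, b, c⟩ := t
  simp only [e021, Equiv.coe_fn_mk]
  by_cases h : c < a ∧ b < c ∧ 0 < b
  · rw [if_pos h]; erw [if_pos h]; ring
  · rw [if_neg h]; erw [if_neg h]

lemma m210 (j1 j2 j3 : ℕ) (u v w : ℂ) :
    (∑' t : ℕ × ℕ × ℕ, if t.2.1 < t.2.2 ∧ t.1 < t.2.1 ∧ 0 < t.1 then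
        u ^ t.1 * v ^ t.2.1 * w ^ t.2.2 /
          ((t.1 : ℂ) ^ j1 * (t.2.1 : ℂ) ^ j2 * (t.2.2 : ℂ) ^ j3) else 0)
      = Li3 j3 j2 j1 w (w * v) (w * v * u) := by
  rw [Li3_eq j3 j2 j1 w v u]
  conv_rhs => rw [← e210.tsum_eq]
  refine tsum_congr fun t => ?_
  obtain ⟨a, b, c⟩ := t
  simp only [e210, Equiv.coe_fn_mk]
  by_cases h : b < c ∧ a < b ∧ 0 < a
  · rw [if_pos h]; erw [if_pos h]; ring
  · rw [if_neg h]; erw [if_neg h]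

lemma m120 (j1 j2 j3 : ℕ) (u v w : ℂ) :
    (∑' t : ℕ × ℕ × ℕ, if t.2.2 < t.2.1 ∧ t.1 < t.2.2 ∧ 0 < t.1 then
        u ^ t.1 * v ^ t.2.1 * w ^ t.2.2 /
          ((t.1 : ℂ) ^ j1 * (t.2.1 : ℂ) ^ j2 * (t.2.2 : ℂ) ^ j3) else 0)
      = Li3 j2 j3 j1 v (v * w) (v * w * u) := by
  rw [Li3_eq j2 j3 j1 v w u]
  conv_rhs => rw [← e120.tsum_eq]
  refine tsum_congr fun t => ?_
  obtain ⟨a, b, c⟩ := t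
  simp only [e120, Equiv.coe_fn_mk]
  by_cases h : c < b ∧ a < c ∧ 0 < a
  · rw [if_pos h]; erw [if_pos h]; ring
  · rw [if_neg h]; erw [if_neg h]

lemma m201 (j1 j2 j3 : ℕ) (u v w : ℂ) :
    (∑' t : ℕ × ℕ × ℕ, if t.1 < t.2.2 ∧ t.2.1 < t.1 ∧ 0 < t.2.1 then
        u ^ t.1 * v ^ t.2.1 * w ^ t.2.2 /
          ((t.1 : ℂ) ^ j1 * (t.2.1 : ℂ) ^ j2 * (t.2.2 : ℂ) ^ j3) else 0)
      = Li3 j3 j1 j2 w (w * u) (w * u * v) := by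
  rw [Li3_eq j3 j1 j2 w u v]
  conv_rhs => rw [← e201.tsum_eq]
  refine tsum_congr fun t => ?_
  obtain ⟨a, b, c⟩ := t
  simp only [e201, Equiv.coe_fn_mk]
  by_cases h : a < c ∧ b < a ∧ 0 < b
  · rw [if_pos h]; erw [if_pos h]; ring
  · rw [if_neg h]; erw [if_neg h]

end TPPAux

namespace TPPAux

lemma mtop_ab (j1 j2 j3 : ℕ) (u v w : ℂ) :
    (∑' t : ℕ × ℕ × ℕ, if t.1 = t.2.1 ∧ t.2.2 < t.1 ∧ 0 < t.2.2 then
        u ^ t.1 * v ^ t.2.1 * w ^ t.2.2 /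
          ((t.1 : ℂ) ^ j1 * (t.2.1 : ℂ) ^ j2 * (t.2.2 : ℂ) ^ j3) else 0)
      = Li2 (j1 + j2) j3 (u * v) (u * v * w) := by
  rw [Li2_top j1 j2 j3 u v w]
  have hinj : Function.Injective (fun p : ℕ × ℕ => ((p.1, p.1, p.2) : ℕ × ℕ × ℕ)) := by
    intro p q hpq
    simp only [Prod.mk.injEq] at hpq
    exact Prod.ext hpq.1 hpq.2.2
  refine Eq.trans (Function.Injective.tsum_eq hinj ?_).symm (tsum_congr fun p => ?_)
  · rintro ⟨a, b, c⟩ hx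
    rw [Function.mem_support] at hx
    by_cases h : a = b ∧ c < a ∧ 0 < c
    · exact ⟨(a, c), by simp [Prod.ext_iff, h.1]⟩
    · exact absurd (if_neg h) hx
  · obtain ⟨m, n⟩ := p
    simp only
    by_cases h : n < m ∧ 0 < n
    · rw [if_pos (by simpa using h), if_pos h]
    · rw [if_neg (by simpa using h), if_neg h]

lemma mtop_bc (j1 j2 j3 : ℕ) (u v w : ℂ) :
    (∑' t : ℕ × ℕ × ℕ, if t.2.1 = t.2.2 ∧ t.1 < t.2.1 ∧ 0 < t.1 then
        u ^ t.1 * v ^ t.2.1 * w ^ t.2.2 /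
          ((t.1 : ℂ) ^ j1 * (t.2.1 : ℂ) ^ j2 * (t.2.2 : ℂ) ^ j3) else 0)
      = Li2 (j2 + j3) j1 (v * w) (v * w * u) := by
  rw [Li2_top j2 j3 j1 v w u]
  have hinj : Function.Injective (fun p : ℕ × ℕ => ((p.2, p.1, p.1) : ℕ × ℕ × ℕ)) := by
    intro p q hpq
    simp only [Prod.mk.injEq] at hpq
    exact Prod.ext hpq.2.1 hpq.1
  refine Eq.trans (Function.Injective.tsum_eq hinj ?_).symm (tsum_congr fun p => ?_)
  · rintro ⟨a, b, c⟩ hx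
    rw [Function.mem_support] at hx
    by_cases h : b = c ∧ a < b ∧ 0 < a
    · exact ⟨(b, a), by simp [Prod.ext_iff, h.1]⟩
    · exact absurd (if_neg h) hx
  · obtain ⟨m, n⟩ := p
    simp only
    by_cases h : n < m ∧ 0 < n
    · rw [if_pos (by simpa using h), if_pos h]; ring
    · rw [if_neg (by simpa using h), if_neg h]

lemma mtop_ca (j1 j2 j3 : ℕ) (u v w : ℂ) :
    (∑' t : ℕ × ℕ × ℕ, if t.1 = t.2.2 ∧ t.2.1 < t.1 ∧ 0 < t.2.1 then
        u ^ t.1 * v ^ t.2.1 * w ^ t.2.2 /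
          ((t.1 : ℂ) ^ j1 * (t.2.1 : ℂ) ^ j2 * (t.2.2 : ℂ) ^ j3) else 0)
      = Li2 (j3 + j1) j2 (w * u) (w * u * v) := by
  rw [Li2_top j3 j1 j2 w u v]
  have hinj : Function.Injective (fun p : ℕ × ℕ => ((p.1, p.2, p.1) : ℕ × ℕ × ℕ)) := by
    intro p q hpq
    simp only [Prod.mk.injEq] at hpq
    exact Prod.ext hpq.1 hpq.2.1
  refine Eq.trans (Function.Injective.tsum_eq hinj ?_).symm (tsum_congr fun p => ?_)
  · rintro ⟨a, b, c⟩ hx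
    rw [Function.mem_support] at hx
    by_cases h : a = c ∧ b < a ∧ 0 < b
    · exact ⟨(a, b), by simp [Prod.ext_iff, h.1]⟩
    · exact absurd (if_neg h) hx
  · obtain ⟨m, n⟩ := p
    simp only
    by_cases h : n < m ∧ 0 < n
    · rw [if_pos (by simpa using h), if_pos h]; ring
    · rw [if_neg (by simpa using h), if_neg h]

lemma mbot_bc (j1 j2 j3 : ℕ) (u v w : ℂ) :
    (∑' t : ℕ × ℕ × ℕ, if t.2.1 = t.2.2 ∧ t.2.1 < t.1 ∧ 0 < t.2.1 then
        u ^ t.1 * v ^ t.2.1 * w ^ t.2.2 /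
          ((t.1 : ℂ) ^ j1 * (t.2.1 : ℂ) ^ j2 * (t.2.2 : ℂ) ^ j3) else 0)
      = Li2 j1 (j2 + j3) u (u * v * w) := by
  rw [Li2_bot j1 j2 j3 u v w]
  have hinj : Function.Injective (fun p : ℕ × ℕ => ((p.1, p.2, p.2) : ℕ × ℕ × ℕ)) := by
    intro p q hpq
    simp only [Prod.mk.injEq] at hpq
    exact Prod.ext hpq.1 hpq.2.1
  refine Eq.trans (Function.Injective.tsum_eq hinj ?_).symm (tsum_congr fun p => ?_)
  · rintro ⟨a, b, c⟩ hx
    rw [Function.mem_support] at hx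
    by_cases h : b = c ∧ b < a ∧ 0 < b
    · exact ⟨(a, b), by simp [Prod.ext_iff, h.1]⟩
    · exact absurd (if_neg h) hx
  · obtain ⟨m, n⟩ := p
    simp only
    by_cases h : n < m ∧ 0 < n
    · rw [if_pos (by simpa using h), if_pos h]
    · rw [if_neg (by simpa using h), if_neg h]

lemma mbot_ca (j1 j2 j3 : ℕ) (u v w : ℂ) :
    (∑' t : ℕ × ℕ × ℕ, if t.2.2 = t.1 ∧ t.2.2 < t.2.1 ∧ 0 < t.2.2 then
        u ^ t.1 * v ^ t.2.1 * w ^ t.2.2 /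
          ((t.1 : ℂ) ^ j1 * (t.2.1 : ℂ) ^ j2 * (t.2.2 : ℂ) ^ j3) else 0)
      = Li2 j2 (j3 + j1) v (v * w * u) := by
  rw [Li2_bot j2 j3 j1 v w u]
  have hinj : Function.Injective (fun p : ℕ × ℕ => ((p.2, p.1, p.2) : ℕ × ℕ × ℕ)) := by
    intro p q hpq
    simp only [Prod.mk.injEq] at hpq
    exact Prod.ext hpq.2.1 hpq.1
  refine Eq.trans (Function.Injective.tsum_eq hinj ?_).symm (tsum_congr fun p => ?_)
  · rintro ⟨a, b, c⟩ hx
    rw [Function.mem_support] at hx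
    by_cases h : c = a ∧ c < b ∧ 0 < c
    · exact ⟨(b, a), by simp [Prod.ext_iff, h.1]⟩
    · exact absurd (if_neg h) hx
  · obtain ⟨m, n⟩ := p
    simp only
    by_cases h : n < m ∧ 0 < n
    · rw [if_pos (by simpa using h), if_pos h]; ring
    · rw [if_neg (by simpa using h), if_neg h]

lemma mbot_ab (j1 j2 j3 : ℕ) (u v w : ℂ) :
    (∑' t : ℕ × ℕ × ℕ, if t.1 = t.2.1 ∧ t.1 < t.2.2 ∧ 0 < t.1 then
        u ^ t.1 * v ^ t.2.1 * w ^ t.2.2 /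
          ((t.1 : ℂ) ^ j1 * (t.2.1 : ℂ) ^ j2 * (t.2.2 : ℂ) ^ j3) else 0)
      = Li2 j3 (j1 + j2) w (w * u * v) := by
  rw [Li2_bot j3 j1 j2 w u v]
  have hinj : Function.Injective (fun p : ℕ × ℕ => ((p.2, p.2, p.1) : ℕ × ℕ × ℕ)) := by
    intro p q hpq
    simp only [Prod.mk.injEq] at hpq
    exact Prod.ext hpq.2.2 hpq.1
  refine Eq.trans (Function.Injective.tsum_eq hinj ?_).symm (tsum_congr fun p => ?_)
  · rintro ⟨a, b, c⟩ hx
    rw [Function.mem_support] at hx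
    by_cases h : a = b ∧ a < c ∧ 0 < a
    · exact ⟨(c, a), by simp [Prod.ext_iff, h.1]⟩
    · exact absurd (if_neg h) hx
  · obtain ⟨m, n⟩ := p
    simp only
    by_cases h : n < m ∧ 0 < n
    · rw [if_pos (by simpa using h), if_pos h]; ring
    · rw [if_neg (by simpa using h), if_neg h]

lemma mdiag (j1 j2 j3 : ℕ) (u v w : ℂ) :
    (∑' t : ℕ × ℕ × ℕ, if t.1 = t.2.1 ∧ t.2.1 = t.2.2 ∧ 0 < t.1 then
        u ^ t.1 * v ^ t.2.1 * w ^ t.2.2 /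
          ((t.1 : ℂ) ^ j1 * (t.2.1 : ℂ) ^ j2 * (t.2.2 : ℂ) ^ j3) else 0)
      = Li (j1 + j2 + j3) (u * v * w) := by
  rw [Li_eq j1 j2 j3 u v w]
  have hinj : Function.Injective (fun n : ℕ => ((n, n, n) : ℕ × ℕ × ℕ)) := by
    intro p q hpq
    simp only [Prod.mk.injEq] at hpq
    exact hpq.1
  refine Eq.trans (Function.Injective.tsum_eq hinj ?_).symm (tsum_congr fun n => ?_)
  · rintro ⟨a, b, c⟩ hx
    rw [Function.mem_support] at hx
    by_cases h : a = b ∧ b = c ∧ 0 < a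
    · exact ⟨a, by simp [Prod.ext_iff, h.1, h.2.1, h.1.trans h.2.1]⟩
    · exact absurd (if_neg h) hx
  · simp only
    by_cases h : 0 < n
    · rw [if_pos (by simpa using h), if_pos h]
    · rw [if_neg (by simpa using h), if_neg h]

end TPPAux


set_option maxHeartbeats 1600000 in
open TPPAux in
theorem triple_product_polylog (k : Fin 3 → ℕ) (hk : ∀ i, 0 < k i)
    (z : Fin 3 → ℂ) (hz : ∀ i, ‖z i‖ < 1) :
    Li (k 0) (z 0) * Li (k 1) (z 1) * Li (k 2) (z 2) =
      (∑ σ : Equiv.Perm (Fin 3),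
        Li3 (k (σ 0)) (k (σ 1)) (k (σ 2)) (z (σ 0)) (z (σ 0) * z (σ 1))
          (z (σ 0) * z (σ 1) * z (σ 2)))
      + (∑ τ ∈ Finset.univ.filter (fun τ : Equiv.Perm (Fin 3) => Equiv.Perm.sign τ = 1),
        Li2 (k (τ 0) + k (τ 1)) (k (τ 2)) (z (τ 0) * z (τ 1)) (z (τ 0) * z (τ 1) * z (τ 2)))
      + (∑ τ ∈ Finset.univ.filter (fun τ : Equiv.Perm (Fin 3) => Equiv.Perm.sign τ = 1),
        Li2 (k (τ 0)) (k (τ 1) + k (τ 2)) (z (τ 0)) (z (τ 0) * z (τ 1) * z (τ 2)))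
      + Li (k 0 + k 1 + k 2) (z 0 * z 1 * z 2) := by
  classical
  have hnorm : ∀ i : Fin 3,
      Summable fun m : ℕ => ‖if 0 < m then z i ^ m / (m : ℂ) ^ k i else 0‖ := by
    intro i
    refine Summable.of_nonneg_of_le (fun _ => norm_nonneg _) (fun m => ?_)
      (summable_geometric_of_lt_one (norm_nonneg (z i)) (hz i))
    by_cases h : 0 < m
    · rw [if_pos h, norm_div, norm_pow, norm_pow, RCLike.norm_natCast]
      exact div_le_self (by positivity) (one_le_pow₀ (by exact_mod_cast h))
    · rw [if_neg h]
      have hm : m = 0 := by omega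
      subst hm
      simp
  have hE : Summable fun t : ℕ × ℕ × ℕ =>
      ‖z 0 ^ t.1 * z 1 ^ t.2.1 * z 2 ^ t.2.2 /
        ((t.1 : ℂ) ^ k 0 * (t.2.1 : ℂ) ^ k 1 * (t.2.2 : ℂ) ^ k 2)‖ := by
    have hgeo : ∀ i : Fin 3, Summable fun m : ℕ => ‖z i‖ ^ m := fun i =>
      summable_geometric_of_lt_one (norm_nonneg (z i)) (hz i)
    have hG : Summable fun t : ℕ × ℕ × ℕ => ‖z 0‖ ^ t.1 * (‖z 1‖ ^ t.2.1 * ‖z 2‖ ^ t.2.2) :=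
      (hgeo 0).mul_of_nonneg ((hgeo 1).mul_of_nonneg (hgeo 2)
        (fun _ => by positivity) (fun _ => by positivity))
        (fun _ => by positivity) (fun _ => by positivity)
    refine Summable.of_nonneg_of_le (fun _ => norm_nonneg _) (fun t => ?_) hG
    obtain ⟨a, b, c⟩ := t
    simp only
    by_cases h : 0 < a ∧ 0 < b ∧ 0 < c
    · rw [norm_div]
      have hnum : ‖z 0 ^ a * z 1 ^ b * z 2 ^ c‖ = ‖z 0‖ ^ a * (‖z 1‖ ^ b * ‖z 2‖ ^ c) := by
        rw [norm_mul, norm_mul, norm_pow, norm_pow, norm_pow]; ring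
      have hden : ‖((a : ℂ) ^ k 0 * (b : ℂ) ^ k 1 * (c : ℂ) ^ k 2)‖
          = (a : ℝ) ^ k 0 * (b : ℝ) ^ k 1 * (c : ℝ) ^ k 2 := by
        rw [norm_mul, norm_mul, norm_pow, norm_pow, norm_pow,
          RCLike.norm_natCast, RCLike.norm_natCast, RCLike.norm_natCast]
      rw [hnum, hden]
      refine div_le_self (by positivity) ?_
      have e1 : (1 : ℝ) ≤ (a : ℝ) ^ k 0 := one_le_pow₀ (by exact_mod_cast h.1)
      have e2 : (1 : ℝ) ≤ (b : ℝ) ^ k 1 := one_le_pow₀ (by exact_mod_cast h.2.1)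
      have e3 : (1 : ℝ) ≤ (c : ℝ) ^ k 2 := one_le_pow₀ (by exact_mod_cast h.2.2)
      calc (1 : ℝ) = 1 * 1 * 1 := by norm_num
        _ ≤ (a : ℝ) ^ k 0 * (b : ℝ) ^ k 1 * (c : ℝ) ^ k 2 := by gcongr <;> norm_num
    · have hden0 : ((a : ℂ) ^ k 0 * (b : ℂ) ^ k 1 * (c : ℂ) ^ k 2) = 0 := by
        rcases (by omega : a = 0 ∨ b = 0 ∨ c = 0) with rfl | rfl | rfl <;>
          simp [zero_pow (hk 0).ne', zero_pow (hk 1).ne', zero_pow (hk 2).ne']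
      rw [hden0, div_zero, norm_zero]
      positivity
  have h12 := tsum_mul_tsum_of_summable_norm (hnorm 1) (hnorm 2)
  have h123 := tsum_mul_tsum_of_summable_norm (hnorm 0) ((hnorm 1).mul_norm (hnorm 2))
  have hstart : (∑' t : ℕ × ℕ × ℕ, (if 0 < t.1 then z 0 ^ t.1 / (t.1 : ℂ) ^ k 0 else 0) *
          ((if 0 < t.2.1 then z 1 ^ t.2.1 / (t.2.1 : ℂ) ^ k 1 else 0) *
           (if 0 < t.2.2 then z 2 ^ t.2.2 / (t.2.2 : ℂ) ^ k 2 else 0)))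
      = ∑' t : ℕ × ℕ × ℕ, if 0 < t.1 ∧ 0 < t.2.1 ∧ 0 < t.2.2 then
          z 0 ^ t.1 * z 1 ^ t.2.1 * z 2 ^ t.2.2 /
            ((t.1 : ℂ) ^ k 0 * (t.2.1 : ℂ) ^ k 1 * (t.2.2 : ℂ) ^ k 2) else 0 := by
    refine tsum_congr fun t => ?_
    by_cases h : 0 < t.1 ∧ 0 < t.2.1 ∧ 0 < t.2.2
    · rw [if_pos h, if_pos h.1, if_pos h.2.1, if_pos h.2.2]; ring
    · rw [if_neg h]
      by_cases h1 : 0 < t.1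
      · by_cases h2 : 0 < t.2.1
        · rw [if_neg (fun hc => h ⟨h1, h2, hc⟩)]; ring
        · rw [if_neg h2]; ring
      · rw [if_neg h1]; ring
  rw [mul_assoc]
  conv_lhs => unfold Li
  rw [h12, h123, hstart]
  -- expand the RHS finite sums
  have huniv : (Finset.univ : Finset (Equiv.Perm (Fin 3))) =
      {1, Equiv.swap 0 1, Equiv.swap 0 2, Equiv.swap 1 2,
       Equiv.swap 0 2 * Equiv.swap 0 1, Equiv.swap 0 1 * Equiv.swap 0 2} := by decide
  have hfil : (Finset.univ.filter (fun τ : Equiv.Perm (Fin 3) => Equiv.Perm.sign τ = 1)) =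
      {1, Equiv.swap 0 2 * Equiv.swap 0 1, Equiv.swap 0 1 * Equiv.swap 0 2} := by decide
  have n1 : (1 : Equiv.Perm (Fin 3)) ∉
      ({Equiv.swap 0 1, Equiv.swap 0 2, Equiv.swap 1 2,
        Equiv.swap 0 2 * Equiv.swap 0 1, Equiv.swap 0 1 * Equiv.swap 0 2} :
        Finset (Equiv.Perm (Fin 3))) := by decide
  have n2 : (Equiv.swap 0 1 : Equiv.Perm (Fin 3)) ∉
      ({Equiv.swap 0 2, Equiv.swap 1 2,
        Equiv.swap 0 2 * Equiv.swap 0 1, Equiv.swap 0 1 * Equiv.swap 0 2} :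
        Finset (Equiv.Perm (Fin 3))) := by decide
  have n3 : (Equiv.swap 0 2 : Equiv.Perm (Fin 3)) ∉
      ({Equiv.swap 1 2, Equiv.swap 0 2 * Equiv.swap 0 1, Equiv.swap 0 1 * Equiv.swap 0 2} :
        Finset (Equiv.Perm (Fin 3))) := by decide
  have n4 : (Equiv.swap 1 2 : Equiv.Perm (Fin 3)) ∉
      ({Equiv.swap 0 2 * Equiv.swap 0 1, Equiv.swap 0 1 * Equiv.swap 0 2} :
        Finset (Equiv.Perm (Fin 3))) := by decide
  have n5 : (Equiv.swap 0 2 * Equiv.swap 0 1 : Equiv.Perm (Fin 3)) ∉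
      ({Equiv.swap 0 1 * Equiv.swap 0 2} : Finset (Equiv.Perm (Fin 3))) := by decide
  have n6 : (1 : Equiv.Perm (Fin 3)) ∉
      ({Equiv.swap 0 2 * Equiv.swap 0 1, Equiv.swap 0 1 * Equiv.swap 0 2} :
        Finset (Equiv.Perm (Fin 3))) := by decide
  rw [hfil, huniv]
  simp only [Finset.sum_insert n1, Finset.sum_insert n2, Finset.sum_insert n3,
    Finset.sum_insert n4, Finset.sum_insert n5, Finset.sum_insert n6, Finset.sum_singleton]
  simp only [Equiv.Perm.one_apply,
    show (Equiv.swap 0 1 : Equiv.Perm (Fin 3)) 0 = 1 from by decide,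
    show (Equiv.swap 0 1 : Equiv.Perm (Fin 3)) 1 = 0 from by decide,
    show (Equiv.swap 0 1 : Equiv.Perm (Fin 3)) 2 = 2 from by decide,
    show (Equiv.swap 0 2 : Equiv.Perm (Fin 3)) 0 = 2 from by decide,
    show (Equiv.swap 0 2 : Equiv.Perm (Fin 3)) 1 = 1 from by decide,
    show (Equiv.swap 0 2 : Equiv.Perm (Fin 3)) 2 = 0 from by decide,
    show (Equiv.swap 1 2 : Equiv.Perm (Fin 3)) 0 = 0 from by decide,
    show (Equiv.swap 1 2 : Equiv.Perm (Fin 3)) 1 = 2 from by decide,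
    show (Equiv.swap 1 2 : Equiv.Perm (Fin 3)) 2 = 1 from by decide,
    show (Equiv.swap 0 2 * Equiv.swap 0 1 : Equiv.Perm (Fin 3)) 0 = 1 from by decide,
    show (Equiv.swap 0 2 * Equiv.swap 0 1 : Equiv.Perm (Fin 3)) 1 = 2 from by decide,
    show (Equiv.swap 0 2 * Equiv.swap 0 1 : Equiv.Perm (Fin 3)) 2 = 0 from by decide,
    show (Equiv.swap 0 1 * Equiv.swap 0 2 : Equiv.Perm (Fin 3)) 0 = 2 from by decide,
    show (Equiv.swap 0 1 * Equiv.swap 0 2 : Equiv.Perm (Fin 3)) 1 = 0 from by decide,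
    show (Equiv.swap 0 1 * Equiv.swap 0 2 : Equiv.Perm (Fin 3)) 2 = 1 from by decide]
  -- split the triple sum into the 13 regions
  rw [tsum_ite_split' _ hE
      (fun t : ℕ × ℕ × ℕ => 0 < t.1 ∧ 0 < t.2.1 ∧ 0 < t.2.2)
      (fun t => t.1 = t.2.1 ∧ 0 < t.1 ∧ 0 < t.2.2)
      (fun t => ¬ t.1 = t.2.1 ∧ 0 < t.1 ∧ 0 < t.2.1 ∧ 0 < t.2.2)
      (fun t => ⟨by omega, by omega⟩)]
  rw [tsum_ite_split' _ hE
      (fun t : ℕ × ℕ × ℕ => t.1 = t.2.1 ∧ 0 < t.1 ∧ 0 < t.2.2)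
      (fun t => t.1 = t.2.1 ∧ t.2.2 < t.1 ∧ 0 < t.2.2)
      (fun t => t.1 = t.2.1 ∧ t.1 ≤ t.2.2 ∧ 0 < t.1)
      (fun t => ⟨by omega, by omega⟩)]
  rw [tsum_ite_split' _ hE
      (fun t : ℕ × ℕ × ℕ => t.1 = t.2.1 ∧ t.1 ≤ t.2.2 ∧ 0 < t.1)
      (fun t => t.1 = t.2.1 ∧ t.2.1 = t.2.2 ∧ 0 < t.1)
      (fun t => t.1 = t.2.1 ∧ t.1 < t.2.2 ∧ 0 < t.1)
      (fun t => ⟨by omega, by omega⟩)]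
  rw [tsum_ite_split' _ hE
      (fun t : ℕ × ℕ × ℕ => ¬ t.1 = t.2.1 ∧ 0 < t.1 ∧ 0 < t.2.1 ∧ 0 < t.2.2)
      (fun t => t.1 < t.2.1 ∧ 0 < t.1 ∧ 0 < t.2.2)
      (fun t => t.2.1 < t.1 ∧ 0 < t.2.1 ∧ 0 < t.2.2)
      (fun t => ⟨by omega, by omega⟩)]
  rw [tsum_ite_split' _ hE
      (fun t : ℕ × ℕ × ℕ => t.1 < t.2.1 ∧ 0 < t.1 ∧ 0 < t.2.2)
      (fun t => t.1 < t.2.1 ∧ t.2.2 < t.1 ∧ 0 < t.2.2)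
      (fun t => t.1 < t.2.1 ∧ t.1 ≤ t.2.2 ∧ 0 < t.1)
      (fun t => ⟨by omega, by omega⟩)]
  rw [tsum_ite_split' _ hE
      (fun t : ℕ × ℕ × ℕ => t.1 < t.2.1 ∧ t.1 ≤ t.2.2 ∧ 0 < t.1)
      (fun t => t.2.2 = t.1 ∧ t.2.2 < t.2.1 ∧ 0 < t.2.2)
      (fun t => t.1 < t.2.1 ∧ t.1 < t.2.2 ∧ 0 < t.1)
      (fun t => ⟨by omega, by omega⟩)]
  rw [tsum_ite_split' _ hE
      (fun t : ℕ × ℕ × ℕ => t.1 < t.2.1 ∧ t.1 < t.2.2 ∧ 0 < t.1)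
      (fun t => t.2.2 < t.2.1 ∧ t.1 < t.2.2 ∧ 0 < t.1)
      (fun t => t.1 < t.2.1 ∧ t.2.1 ≤ t.2.2 ∧ 0 < t.1)
      (fun t => ⟨by omega, by omega⟩)]
  rw [tsum_ite_split' _ hE
      (fun t : ℕ × ℕ × ℕ => t.1 < t.2.1 ∧ t.2.1 ≤ t.2.2 ∧ 0 < t.1)
      (fun t => t.2.1 = t.2.2 ∧ t.1 < t.2.1 ∧ 0 < t.1)
      (fun t => t.2.1 < t.2.2 ∧ t.1 < t.2.1 ∧ 0 < t.1)
      (fun t => ⟨by omega, by omega⟩)]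
  rw [tsum_ite_split' _ hE
      (fun t : ℕ × ℕ × ℕ => t.2.1 < t.1 ∧ 0 < t.2.1 ∧ 0 < t.2.2)
      (fun t => t.2.1 < t.1 ∧ t.2.2 < t.2.1 ∧ 0 < t.2.2)
      (fun t => t.2.1 < t.1 ∧ t.2.1 ≤ t.2.2 ∧ 0 < t.2.1)
      (fun t => ⟨by omega, by omega⟩)]
  rw [tsum_ite_split' _ hE
      (fun t : ℕ × ℕ × ℕ => t.2.1 < t.1 ∧ t.2.1 ≤ t.2.2 ∧ 0 < t.2.1)
      (fun t => t.2.1 = t.2.2 ∧ t.2.1 < t.1 ∧ 0 < t.2.1)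
      (fun t => t.2.1 < t.1 ∧ t.2.1 < t.2.2 ∧ 0 < t.2.1)
      (fun t => ⟨by omega, by omega⟩)]
  rw [tsum_ite_split' _ hE
      (fun t : ℕ × ℕ × ℕ => t.2.1 < t.1 ∧ t.2.1 < t.2.2 ∧ 0 < t.2.1)
      (fun t => t.2.2 < t.1 ∧ t.2.1 < t.2.2 ∧ 0 < t.2.1)
      (fun t => t.2.1 < t.1 ∧ t.1 ≤ t.2.2 ∧ 0 < t.2.1)
      (fun t => ⟨by omega, by omega⟩)]
  rw [tsum_ite_split' _ hE
      (fun t : ℕ × ℕ × ℕ => t.2.1 < t.1 ∧ t.1 ≤ t.2.2 ∧ 0 < t.2.1)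
      (fun t => t.1 = t.2.2 ∧ t.2.1 < t.1 ∧ 0 < t.2.1)
      (fun t => t.1 < t.2.2 ∧ t.2.1 < t.1 ∧ 0 < t.2.1)
      (fun t => ⟨by omega, by omega⟩)]
  beta_reduce
  rw [m012 (k 0) (k 1) (k 2) (z 0) (z 1) (z 2),
    m102 (k 0) (k 1) (k 2) (z 0) (z 1) (z 2),
    m021 (k 0) (k 1) (k 2) (z 0) (z 1) (z 2),
    m210 (k 0) (k 1) (k 2) (z 0) (z 1) (z 2),
    m120 (k 0) (k 1) (k 2) (z 0) (z 1) (z 2),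
    m201 (k 0) (k 1) (k 2) (z 0) (z 1) (z 2),
    mtop_ab (k 0) (k 1) (k 2) (z 0) (z 1) (z 2),
    mtop_bc (k 0) (k 1) (k 2) (z 0) (z 1) (z 2),
    mtop_ca (k 0) (k 1) (k 2) (z 0) (z 1) (z 2),
    mbot_bc (k 0) (k 1) (k 2) (z 0) (z 1) (z 2),
    mbot_ca (k 0) (k 1) (k 2) (z 0) (z 1) (z 2),
    mbot_ab (k 0) (k 1) (k 2) (z 0) (z 1) (z 2),
    mdiag (k 0) (k 1) (k 2) (z 0) (z 1) (z 2)]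
  ring
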